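/- There exists a plain interpretation of primal infon logic P: an infon algebra and evaluation v such that v is injective on infons and the closure of any deductively closed set of infon-values contains no values of infons outside it. In particular, one can take v(φ) to be (an encoding of) the syntax tree of φ, with π and enc given by syntactic formula constructors. -/

import Mathlib

/-- Infons: formulas built from atoms, ⊤, ⊥, conjunction and primal implication. -/
inductive Infon : Type
  | atom : ℕ → Infon
  | top : Infon
  | bot : Infon
  | and : Infon → Infon → Infon
  | imp : Infon → Infon → Infon
deriving DecidableEq

/-- Derivability in the basic primal infon logic P (⊥ is an ordinary atom, no rule for it). -/
inductive DerP : Set Infon → Infon → Prop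
  | top (Γ : Set Infon) : DerP Γ .top
  | id (φ : Infon) : DerP {φ} φ
  | weak {Γ φ} (Δ : Set Infon) : DerP Γ φ → DerP (Γ ∪ Δ) φ
  | cut {Γ φ ψ} : DerP Γ φ → DerP (insert φ Γ) ψ → DerP Γ ψ
  | andI {Γ φ ψ} : DerP Γ φ → DerP Γ ψ → DerP Γ (.and φ ψ)
  | andE1 {Γ φ ψ} : DerP Γ (.and φ ψ) → DerP Γ φ
  | andE2 {Γ φ ψ} : DerP Γ (.and φ ψ) → DerP Γ ψ
  | impI {Γ ψ} (φ : Infon) : DerP Γ ψ → DerP Γ (.imp φ ψ)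
  | impE {Γ φ ψ} : DerP Γ φ → DerP Γ (.imp φ ψ) → DerP Γ ψ

/-- Derivability in P[⊥_w]: P plus the weak ⊥-elimination rule. -/
inductive DerW : Set Infon → Infon → Prop
  | top (Γ : Set Infon) : DerW Γ .top
  | id (φ : Infon) : DerW {φ} φ
  | weak {Γ φ} (Δ : Set Infon) : DerW Γ φ → DerW (Γ ∪ Δ) φ
  | cut {Γ φ ψ} : DerW Γ φ → DerW (insert φ Γ) ψ → DerW Γ ψ
  | andI {Γ φ ψ} : DerW Γ φ → DerW Γ ψ → DerW Γ (.and φ ψ)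
  | andE1 {Γ φ ψ} : DerW Γ (.and φ ψ) → DerW Γ φ
  | andE2 {Γ φ ψ} : DerW Γ (.and φ ψ) → DerW Γ ψ
  | impI {Γ ψ} (φ : Infon) : DerW Γ ψ → DerW Γ (.imp φ ψ)
  | impE {Γ φ ψ} : DerW Γ φ → DerW Γ (.imp φ ψ) → DerW Γ ψ
  | botEw {Γ φ ψ} : DerW Γ .bot → DerW Γ (.imp φ ψ) → DerW Γ ψ

/-- Positive atoms of an infon. -/
def posAt : Infon → Set Infon
  | .and φ ψ => posAt φ ∪ posAt ψ
  | .imp _ ψ => posAt ψ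
  | φ => {φ}

/-- Positive atoms of a context. -/
def posCtx (Γ : Set Infon) : Set Infon := ⋃ φ ∈ Γ, posAt φ

/-- Binary strings Σ* over Σ = {0,1}. -/
abbrev Str := List Bool

/-- A cryptographic infon algebra over binary strings: pairing with (partial) projections,
total encryption with (partial) decryption, and a nonempty public set E. -/
structure InfonAlgebra where
  pi : Str → Str → Str
  l : Str → Option Str
  r : Str → Option Str
  enc : Str → Str → Str
  dec : Str → Str → Option Str
  E : Set Str
  E_nonempty : E.Nonempty
  l_pi : ∀ x y, l (pi x y) = some x
  r_pi : ∀ x y, r (pi x y) = some y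
  dec_enc : ∀ x y, dec x (enc x y) = some y

/-- M ⊆ Σ* is closed (w.r.t. an infon algebra A). -/
def ClosedInfoSet (A : InfonAlgebra) (M : Set Str) : Prop :=
  A.E ⊆ M ∧
  (∀ a b, (a ∈ M ∧ b ∈ M) ↔ A.pi a b ∈ M) ∧
  (∀ a b, a ∈ M → A.enc a b ∈ M → b ∈ M) ∧
  (∀ a b, b ∈ M → A.enc a b ∈ M)

/-- An interpretation: an evaluation of infons by strings, commuting with the connectives
(∧ goes to pairing, primal → goes to encryption), with v(⊤) ∈ E. -/
structure Interp (A : InfonAlgebra) where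
  v : Infon → Str
  v_top : v .top ∈ A.E
  v_and : ∀ φ ψ, v (.and φ ψ) = A.pi (v φ) (v ψ)
  v_imp : ∀ φ ψ, v (.imp φ ψ) = A.enc (v φ) (v ψ)

/-- The closure of a set of strings: the least closed superset. -/
def closureA (A : InfonAlgebra) (M₀ : Set Str) : Set Str :=
  ⋂₀ {M | ClosedInfoSet A M ∧ M₀ ⊆ M}

/-- A set of infons is deductively closed if it is closed under derivability in P. -/
def DedClosed (T : Set Infon) : Prop := ∀ ψ, DerP T ψ → ψ ∈ T

/-- A plain interpretation: v is injective, and the closure of (the set of values of) any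
deductively closed set of infons contains no new values of infons. -/
def Plain (A : InfonAlgebra) (I : Interp A) : Prop :=
  Function.Injective I.v ∧
  ∀ T : Set Infon, DedClosed T →
    ∀ φ : Infon, I.v φ ∈ closureA A (I.v '' T) → I.v φ ∈ I.v '' T


/-! ### Auxiliary constructions for the plain interpretation -/

/-- Bijective base-2 value of a binary string. -/
def toN : Str → ℕ
  | [] => 0
  | b :: l => 2 * toN l + cond b 2 1

/-- Inverse of `toN`. -/
def dN : ℕ → Str
  | 0 => []
  | n+1 => (if (n+1) % 2 = 0 then true else false) :: dN (n/2)
termination_by n => n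
decreasing_by omega

lemma toN_dN : ∀ n, toN (dN n) = n := by
  intro n
  induction n using Nat.strong_induction_on with
  | _ n ih =>
    match n with
    | 0 => simp [dN, toN]
    | n+1 =>
      rw [dN]
      by_cases h : (n+1) % 2 = 0 <;> simp [h, toN, ih (n/2) (by omega)] <;> omega

lemma dN_toN : ∀ l, dN (toN l) = l := by
  intro l
  induction l with
  | nil => simp [toN, dN]
  | cons b l ih =>
    cases b <;> simp only [toN, cond]
    · rw [show 2 * toN l + 1 = (2 * toN l) + 1 from rfl, dN]
      congr 1
      · simp
      · rw [show 2 * toN l / 2 = toN l by omega]; exact ih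
    · rw [show 2 * toN l + 2 = (2 * toN l + 1) + 1 from rfl, dN]
      congr 1
      · simp; omega
      · rw [show (2 * toN l + 1) / 2 = toN l by omega]; exact ih

lemma dN_inj : Function.Injective dN := by
  intro a b h
  have := congrArg toN h
  rwa [toN_dN, toN_dN] at this

/-- Numeric code of an infon's syntax tree. -/
def codeI : Infon → ℕ
  | .top => 0
  | .bot => 3
  | .atom k => 3 * k + 6
  | .and φ ψ => 3 * Nat.pair (codeI φ) (codeI ψ) + 1
  | .imp φ ψ => 3 * Nat.pair (codeI φ) (codeI ψ) + 2

lemma codeI_inj : ∀ φ ψ : Infon, codeI φ = codeI ψ → φ = ψ := by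
  intro φ
  induction φ with
  | atom k =>
      intro ψ h
      cases ψ <;> simp only [codeI] at h <;>
        first | omega | (simp only [Infon.atom.injEq]; omega)
  | top => intro ψ h; cases ψ <;> simp only [codeI] at h <;> first | rfl | omega
  | bot => intro ψ h; cases ψ <;> simp only [codeI] at h <;> first | rfl | omega
  | and a b iha ihb =>
      intro ψ h
      cases ψ with
      | and c d =>
          have hp := Nat.pair_eq_pair.mp
            (show Nat.pair (codeI a) (codeI b) = Nat.pair (codeI c) (codeI d) by
              simp only [codeI] at h; omega)
          rw [iha c hp.1, ihb d hp.2]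
      | atom k => simp only [codeI] at h; omega
      | top => simp only [codeI] at h; omega
      | bot => simp only [codeI] at h; omega
      | imp c d => simp only [codeI] at h; omega
  | imp a b iha ihb =>
      intro ψ h
      cases ψ with
      | imp c d =>
          have hp := Nat.pair_eq_pair.mp
            (show Nat.pair (codeI a) (codeI b) = Nat.pair (codeI c) (codeI d) by
              simp only [codeI] at h; omega)
          rw [iha c hp.1, ihb d hp.2]
      | atom k => simp only [codeI] at h; omega
      | top => simp only [codeI] at h; omega
      | bot => simp only [codeI] at h; omega
      | and c d => simp only [codeI] at h; omega

/-- The evaluation: the (encoded) syntax tree of the infon. -/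
def vS (φ : Infon) : Str := dN (codeI φ)

lemma vS_inj : Function.Injective vS := by
  intro a b h
  exact codeI_inj a b (dN_inj h)

lemma toN_vS (φ : Infon) : toN (vS φ) = codeI φ := toN_dN _

/-- The syntactic infon algebra. -/
def theAlg : InfonAlgebra where
  pi x y := dN (3 * Nat.pair (toN x) (toN y) + 1)
  l s := some (dN (Nat.unpair (toN s / 3)).1)
  r s := some (dN (Nat.unpair (toN s / 3)).2)
  enc x y := dN (3 * Nat.pair (toN x) (toN y) + 2)
  dec _ s := some (dN (Nat.unpair (toN s / 3)).2)
  E := {dN 0}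
  E_nonempty := ⟨dN 0, rfl⟩
  l_pi x y := by
    show some (dN (Nat.unpair (toN (dN (3 * Nat.pair (toN x) (toN y) + 1)) / 3)).1) = some x
    rw [toN_dN, show (3 * Nat.pair (toN x) (toN y) + 1) / 3 = Nat.pair (toN x) (toN y) by omega,
      Nat.unpair_pair]
    simp [dN_toN]
  r_pi x y := by
    show some (dN (Nat.unpair (toN (dN (3 * Nat.pair (toN x) (toN y) + 1)) / 3)).2) = some y
    rw [toN_dN, show (3 * Nat.pair (toN x) (toN y) + 1) / 3 = Nat.pair (toN x) (toN y) by omega,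
      Nat.unpair_pair]
    simp [dN_toN]
  dec_enc x y := by
    show some (dN (Nat.unpair (toN (dN (3 * Nat.pair (toN x) (toN y) + 2)) / 3)).2) = some y
    rw [toN_dN, show (3 * Nat.pair (toN x) (toN y) + 2) / 3 = Nat.pair (toN x) (toN y) by omega,
      Nat.unpair_pair]
    simp [dN_toN]

/-- The syntactic interpretation. -/
def theInterp : Interp theAlg where
  v := vS
  v_top := rfl
  v_and φ ψ := by
    show dN (3 * Nat.pair (codeI φ) (codeI ψ) + 1) = dN (3 * Nat.pair (toN (vS φ)) (toN (vS ψ)) + 1)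
    rw [toN_vS, toN_vS]
  v_imp φ ψ := by
    show dN (3 * Nat.pair (codeI φ) (codeI ψ) + 2) = dN (3 * Nat.pair (toN (vS φ)) (toN (vS ψ)) + 2)
    rw [toN_vS, toN_vS]

/-- The witnessing closed superset, defined by recursion on codes. -/
def P (G : Set Str) : ℕ → Prop
  | n =>
    if h1 : n % 3 = 1 then P G (Nat.unpair (n/3)).1 ∧ P G (Nat.unpair (n/3)).2
    else if h2 : n % 3 = 2 then P G (Nat.unpair (n/3)).2 ∨ dN n ∈ G
    else dN n ∈ G ∨ n = 0
termination_by n => n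
decreasing_by
  all_goals
    first
    | exact lt_of_le_of_lt (Nat.unpair_left_le _) (by omega)
    | exact lt_of_le_of_lt (Nat.unpair_right_le _) (by omega)

def MStar (G : Set Str) : Set Str := {s | P G (toN s)}

lemma derMem {T : Set Infon} {φ : Infon} (h : φ ∈ T) : DerP T φ := by
  have h2 := DerP.weak (Γ := {φ}) T (DerP.id φ)
  rwa [Set.union_eq_self_of_subset_left (Set.singleton_subset_iff.mpr h)] at h2

lemma main_lemma (T : Set Infon) (hT : DedClosed T) :
    ∀ φ, P (vS '' T) (codeI φ) ↔ φ ∈ T := by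
  intro φ
  induction φ with
  | top =>
      show P (vS '' T) 0 ↔ _
      rw [P]
      norm_num
      exact hT _ (DerP.top T)
  | bot =>
      show P (vS '' T) 3 ↔ _
      rw [P, dif_neg (by omega), dif_neg (by omega), or_iff_left (by omega)]
      rw [show dN 3 = vS Infon.bot from rfl, vS_inj.mem_set_image]
  | atom k =>
      show P (vS '' T) (3 * k + 6) ↔ _
      rw [P, dif_neg (by omega), dif_neg (by omega), or_iff_left (by omega)]
      rw [show dN (3 * k + 6) = vS (Infon.atom k) from rfl, vS_inj.mem_set_image]
  | and a b iha ihb =>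
      show P (vS '' T) (3 * Nat.pair (codeI a) (codeI b) + 1) ↔ _
      rw [P, dif_pos (by omega),
        show (3 * Nat.pair (codeI a) (codeI b) + 1) / 3 = Nat.pair (codeI a) (codeI b) by omega,
        Nat.unpair_pair]
      show P (vS '' T) (codeI a) ∧ P (vS '' T) (codeI b) ↔ _
      rw [iha, ihb]
      constructor
      · rintro ⟨h1, h2⟩
        exact hT _ (DerP.andI (derMem h1) (derMem h2))
      · intro h
        exact ⟨hT _ (DerP.andE1 (derMem h)), hT _ (DerP.andE2 (derMem h))⟩
  | imp a b iha ihb =>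
      show P (vS '' T) (3 * Nat.pair (codeI a) (codeI b) + 2) ↔ _
      rw [P, dif_neg (by omega), dif_pos (by omega),
        show (3 * Nat.pair (codeI a) (codeI b) + 2) / 3 = Nat.pair (codeI a) (codeI b) by omega,
        Nat.unpair_pair]
      show P (vS '' T) (codeI b) ∨ dN (3 * Nat.pair (codeI a) (codeI b) + 2) ∈ vS '' T ↔ _
      rw [ihb, show dN (3 * Nat.pair (codeI a) (codeI b) + 2) = vS (Infon.imp a b) from rfl,
        vS_inj.mem_set_image]
      constructor
      · rintro (h | h)
        · exact hT _ (DerP.impI a (derMem h))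
        · exact h
      · exact Or.inr

lemma closed_MStar (T : Set Infon) (hT : DedClosed T) :
    ClosedInfoSet theAlg (MStar (vS '' T)) := by
  refine ⟨?_, ?_, ?_, ?_⟩
  · intro s hs
    rw [show theAlg.E = {dN 0} from rfl, Set.mem_singleton_iff] at hs
    subst hs
    show P (vS '' T) (toN (dN 0))
    rw [toN_dN, P]
    norm_num
  · intro a b
    have he : toN (theAlg.pi a b) = 3 * Nat.pair (toN a) (toN b) + 1 := toN_dN _
    show _ ↔ P (vS '' T) (toN (theAlg.pi a b))
    rw [he, P, dif_pos (by omega),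
      show (3 * Nat.pair (toN a) (toN b) + 1) / 3 = Nat.pair (toN a) (toN b) by omega,
      Nat.unpair_pair]
    exact Iff.rfl
  · intro a b ha hab
    have he : toN (theAlg.enc a b) = 3 * Nat.pair (toN a) (toN b) + 2 := toN_dN _
    have hab' : P (vS '' T) (toN (theAlg.enc a b)) := hab
    rw [he, P, dif_neg (by omega), dif_pos (by omega),
      show (3 * Nat.pair (toN a) (toN b) + 2) / 3 = Nat.pair (toN a) (toN b) by omega,
      Nat.unpair_pair] at hab'
    rcases hab' with h | h
    · exact h
    · obtain ⟨χ, hχT, hχ⟩ := h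
      have hcode : codeI χ = 3 * Nat.pair (toN a) (toN b) + 2 := by
        have := congrArg toN hχ
        rwa [toN_vS, toN_dN] at this
      cases χ with
      | atom k => exact absurd hcode (by simp only [codeI]; omega)
      | top => exact absurd hcode (by simp only [codeI]; omega)
      | bot => exact absurd hcode (by simp only [codeI]; omega)
      | and c d => exact absurd hcode (by simp only [codeI]; omega)
      | imp c d =>
          have hp := Nat.pair_eq_pair.mp
            (show Nat.pair (codeI c) (codeI d) = Nat.pair (toN a) (toN b) by
              simp only [codeI] at hcode; omega)
          have hc : c ∈ T := by
            rw [← main_lemma T hT c, hp.1]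
            exact ha
          have hd : d ∈ T := hT _ (DerP.impE (derMem hc) (derMem hχT))
          show P (vS '' T) (toN b)
          rw [← hp.2]
          exact (main_lemma T hT d).mpr hd
  · intro a b hb
    have he : toN (theAlg.enc a b) = 3 * Nat.pair (toN a) (toN b) + 2 := toN_dN _
    show P (vS '' T) (toN (theAlg.enc a b))
    rw [he, P, dif_neg (by omega), dif_pos (by omega),
      show (3 * Nat.pair (toN a) (toN b) + 2) / 3 = Nat.pair (toN a) (toN b) by omega,
      Nat.unpair_pair]
    exact Or.inl hb

/-- There exists a plain interpretation of primal infon logic P. -/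
theorem exists_plain_interpretation :
    ∃ (A : InfonAlgebra) (I : Interp A), Plain A I := by
  refine ⟨theAlg, theInterp, vS_inj, ?_⟩
  intro T hT φ hφ
  have hsub : (theInterp.v '' T) ⊆ MStar (vS '' T) := by
    rintro s ⟨χ, hχ, rfl⟩
    show P (vS '' T) (toN (vS χ))
    rw [toN_vS]
    exact (main_lemma T hT χ).mpr hχ
  have hmem : theInterp.v φ ∈ MStar (vS '' T) := by
    have hcl : MStar (vS '' T) ∈ {M | ClosedInfoSet theAlg M ∧ theInterp.v '' T ⊆ M} :=
      ⟨closed_MStar T hT, hsub⟩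
    exact Set.sInter_subset_of_mem hcl hφ
  have hP : P (vS '' T) (codeI φ) := by
    have : P (vS '' T) (toN (vS φ)) := hmem
    rwa [toN_vS] at this
  exact ⟨φ, (main_lemma T hT φ).mp hP, rfl⟩
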